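/- Let α ≥ 1 and β ≥ 1 be integers, let G = (G₁,G₂) ∈ ℂ[X,Y]² satisfy det J_G(X,Y) = c·X^{β−α−1} identically for some nonzero constant c ∈ ℂ (in particular β ≥ α+1), let H ∈ ℂ[U,V] be irreducible with zero set {(u,v) : H(u,v) = 0} = {G(0,y) : y ∈ ℂ}, and let γ ≥ 1 be an integer and S ∈ ℂ[X,Y] with S(0,Y) ≢ 0 and H(G(X,Y)) = X^{γ}·S(X,Y). If γ ≥ 2, then β − α − 1 > 0. Moreover, if S(0,y) ≠ 0 for every y ∈ ℂ and the curve {H = 0} has at least one singular point, then γ ≥ 2 and β − α − 1 > 0. -/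

import Mathlib

open MvPolynomial Filter

abbrev PolyPair := MvPolynomial (Fin 2) ℂ × MvPolynomial (Fin 2) ℂ

noncomputable def eval2 (p : MvPolynomial (Fin 2) ℂ) (x y : ℂ) : ℂ :=
  MvPolynomial.eval ![x, y] p

noncomputable def jacDet (P Q : MvPolynomial (Fin 2) ℂ) : MvPolynomial (Fin 2) ℂ :=
  pderiv 0 P * pderiv 1 Q - pderiv 1 P * pderiv 0 Q

noncomputable def polyMap (F : PolyPair) (p : ℂ × ℂ) : ℂ × ℂ :=
  (eval2 F.1 p.1 p.2, eval2 F.2 p.1 p.2)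

/-- `F` is a Keller mapping: its Jacobian determinant is a nonzero constant. -/
def IsKeller (F : PolyPair) : Prop :=
  ∃ c : ℂ, c ≠ 0 ∧ jacDet F.1 F.2 = MvPolynomial.C c

/-- `(u₀,v₀)` is a singular point of the plane curve `{H = 0}`. -/
def IsSingularPoint (H : MvPolynomial (Fin 2) ℂ) (p : ℂ × ℂ) : Prop :=
  eval2 H p.1 p.2 = 0 ∧ eval2 (pderiv 0 H) p.1 p.2 = 0 ∧ eval2 (pderiv 1 H) p.1 p.2 = 0

/-- `G` is the `R`-dual of `F`, where `R(x,y) = (x^{-α}, x^β y + x^{-α} φ(x))`. -/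
def IsRDual (F G : PolyPair) (α β : ℕ) (φ : Polynomial ℂ) : Prop :=
  ∀ x : ℂ, x ≠ 0 → ∀ y : ℂ,
    polyMap G (x, y) = polyMap F ((x ^ α)⁻¹, x ^ β * y + (x ^ α)⁻¹ * Polynomial.eval x φ)

/-- `p` is an asymptotic value of `F` : a limit of `F` along a curve tending to infinity. -/
def IsAsympValue (F : PolyPair) (p : ℂ × ℂ) : Prop :=
  ∃ γ : ℝ → ℂ × ℂ, Continuous γ ∧ Tendsto (fun t => ‖γ t‖) atTop atTop ∧
    Tendsto (fun t => polyMap F (γ t)) atTop (nhds p)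

/-- `F` is a polynomial automorphism of `ℂ²`. -/
def IsPolyAuto (F : PolyPair) : Prop :=
  ∃ Finv : PolyPair, (∀ p, polyMap F (polyMap Finv p) = p) ∧
    (∀ p, polyMap Finv (polyMap F p) = p)

section Aux

theorem chainRuleAux (g : Fin 2 → MvPolynomial (Fin 2) ℂ) (H : MvPolynomial (Fin 2) ℂ) (i : Fin 2) :
    pderiv i (aeval g H) =
      aeval g (pderiv 0 H) * pderiv i (g 0) + aeval g (pderiv 1 H) * pderiv i (g 1) := by
  induction H using MvPolynomial.induction_on with
  | C a => simp
  | add p q hp hq => simp only [map_add, hp, hq]; ring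
  | mul_X p j hp =>
      have hi : i = 0 ∨ i = 1 := by omega
      have hj : j = 0 ∨ j = 1 := by omega
      simp only [map_mul, aeval_X, pderiv_mul, map_add, hp]
      rcases hi with rfl | rfl <;> rcases hj with rfl | rfl <;>
        simp [pderiv_X_self, pderiv_X_of_ne, (by decide : (0:Fin 2) ≠ 1),
          (by decide : (1:Fin 2) ≠ 0)] <;> ring

noncomputable def lexDeg (f : MvPolynomial (Fin 2) ℂ) : Lex (Fin 2 →₀ ℕ) :=
  AddMonoidAlgebra.supDegree (toLex : (Fin 2 →₀ ℕ) → Lex (Fin 2 →₀ ℕ)) f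

lemma toLex_strict : StrictMono (@toLex (Fin 2 →₀ ℕ)) :=
  Finsupp.toLex_monotone.strictMono_of_injective toLex.injective

lemma sub_single_lt {s : Fin 2 →₀ ℕ} {i : Fin 2} (hs : s i ≠ 0) :
    toLex (s - Finsupp.single i 1) < toLex s := by
  apply toLex_strict
  constructor
  · intro j
    simp [Finsupp.tsub_apply]
  · intro hle
    have := hle i
    simp [Finsupp.tsub_apply] at this
    omega

lemma supp_pderiv {f : MvPolynomial (Fin 2) ℂ} {i : Fin 2} {m : Fin 2 →₀ ℕ}
    (hm : m ∈ (pderiv i f).support) :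
    ∃ s ∈ f.support, s i ≠ 0 ∧ m = s - Finsupp.single i 1 := by
  classical
  have : pderiv i f = ∑ s ∈ f.support, monomial (s - Finsupp.single i 1) (coeff s f * s i) := by
    conv_lhs => rw [f.as_sum]
    rw [map_sum]
    exact Finset.sum_congr rfl fun s _ => pderiv_monomial
  rw [this] at hm
  obtain ⟨s, hs, hm2⟩ := Finset.mem_biUnion.mp (MvPolynomial.support_sum hm)
  have hne : coeff s f * (s i : ℂ) ≠ 0 := by
    intro h0
    rw [h0, monomial_zero] at hm2
    simp at hm2
  have hmem := support_monomial_subset hm2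
  simp only [Finset.mem_singleton] at hmem
  refine ⟨s, hs, ?_, hmem⟩
  intro h
  rw [h] at hne
  simp at hne

lemma lexDeg_eq_sup (f : MvPolynomial (Fin 2) ℂ) :
    lexDeg f = (MvPolynomial.support f).sup toLex := rfl

lemma lexDeg_pderiv_lt {f : MvPolynomial (Fin 2) ℂ} {i : Fin 2}
    (h : pderiv i f ≠ 0) : lexDeg (pderiv i f) < lexDeg f := by
  classical
  obtain ⟨m0, hm0⟩ := MvPolynomial.ne_zero_iff.mp h
  obtain ⟨s0, hs0, hsi0, -⟩ := supp_pderiv (MvPolynomial.mem_support_iff.mpr hm0)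
  have hbot : (⊥ : Lex (Fin 2 →₀ ℕ)) < lexDeg f := by
    have h1 : (⊥ : Lex (Fin 2 →₀ ℕ)) < toLex s0 :=
      lt_of_le_of_lt bot_le (sub_single_lt hsi0)
    exact lt_of_lt_of_le h1 (Finset.le_sup hs0)
  rw [lexDeg_eq_sup, Finset.sup_lt_iff hbot]
  intro m hm
  obtain ⟨s, hs, hsi, rfl⟩ := supp_pderiv hm
  exact lt_of_lt_of_le (sub_single_lt hsi) (Finset.le_sup hs)

lemma eq_zero_of_dvd_pderiv {h : MvPolynomial (Fin 2) ℂ} {i : Fin 2}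
    (hd : h ∣ pderiv i h) : pderiv i h = 0 := by
  by_contra hne
  obtain ⟨k, hk⟩ := hd
  have hh : h ≠ 0 := by rintro rfl; simp at hne
  have hk0 : k ≠ 0 := by rintro rfl; rw [mul_zero] at hk; exact hne hk
  have hmul : lexDeg (h * k) = lexDeg h + lexDeg k := by
    apply AddMonoidAlgebra.supDegree_mul toLex.injective (fun a b => rfl) ?_ hh hk0
    exact mul_ne_zero ((AddMonoidAlgebra.leadingCoeff_eq_zero toLex.injective).not.mpr hh)
      ((AddMonoidAlgebra.leadingCoeff_eq_zero toLex.injective).not.mpr hk0)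
  have hle : lexDeg h ≤ lexDeg (h * k) := by
    rw [hmul]
    calc lexDeg h = lexDeg h + 0 := by rw [add_zero]
    _ ≤ lexDeg h + lexDeg k := add_le_add (le_refl _) bot_le
  rw [← hk] at hle
  exact absurd (lexDeg_pderiv_lt hne) (not_lt.mpr hle)

lemma coeff_pderiv' (f : MvPolynomial (Fin 2) ℂ) (i : Fin 2) (m : Fin 2 →₀ ℕ) :
    coeff m (pderiv i f) = ((m i : ℂ) + 1) * coeff (m + Finsupp.single i 1) f := by
  classical
  induction f using MvPolynomial.induction_on' with
  | add p q hp hq => simp only [map_add, coeff_add, hp, hq]; ring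
  | monomial s a =>
      rw [pderiv_monomial, coeff_monomial, coeff_monomial]
      by_cases h : s = m + Finsupp.single i 1
      · have h1 : s - Finsupp.single i 1 = m := by
          subst h; ext j
          by_cases hj : i = j
          · subst hj; simp [Finsupp.tsub_apply, Finsupp.single_apply]
          · simp [Finsupp.tsub_apply, Finsupp.single_apply, hj, Ne.symm hj]
        have h2 : (s i : ℂ) = (m i : ℂ) + 1 := by
          subst h; push_cast; simp [Finsupp.single_apply]
        rw [if_pos h1, if_pos h, h2]; ring
      · rw [if_neg h, mul_zero]
        by_cases h2 : s - Finsupp.single i 1 = m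
        · rw [if_pos h2]
          have hs0 : s i = 0 := by
            by_contra hsi
            apply h
            ext j
            have hji := congrFun (congrArg (fun f : Fin 2 →₀ ℕ => (f : Fin 2 → ℕ)) h2) j
            by_cases hj : i = j
            · subst hj
              simp [Finsupp.tsub_apply] at hji
              simp [Finsupp.single_apply]
              omega
            · simp [Finsupp.tsub_apply, Finsupp.single_apply, hj, Ne.symm hj] at hji ⊢
              omega
          simp [hs0]
        · rw [if_neg h2]

lemma eq_C_of_pderiv_eq_zero {H : MvPolynomial (Fin 2) ℂ}
    (h0 : pderiv 0 H = 0) (h1 : pderiv 1 H = 0) : H = C (coeff 0 H) := by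
  ext m
  rw [coeff_C]
  by_cases hm : 0 = m
  · rw [if_pos hm, ← hm]
  · rw [if_neg hm]
    have hex : ∃ i, m i ≠ 0 := by
      by_contra hc
      push_neg at hc
      apply hm
      ext j
      simp [hc j]
    obtain ⟨i, hi⟩ := hex
    have hderiv : pderiv i H = 0 := by
      rcases (by omega : i = 0 ∨ i = 1) with rfl | rfl
      · exact h0
      · exact h1
    have key := coeff_pderiv' H i (m - Finsupp.single i 1)
    have hrw : m - Finsupp.single i 1 + Finsupp.single i 1 = m := by
      ext j
      by_cases hj : i = j
      · subst hj; simp [Finsupp.tsub_apply, Finsupp.single_apply]; omega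
      · simp [Finsupp.tsub_apply, Finsupp.single_apply, hj, Ne.symm hj]
    rw [hrw, hderiv] at key
    simp only [coeff_zero] at key
    exact (mul_eq_zero.mp key.symm).resolve_left (Nat.cast_add_one_ne_zero _)

lemma eval_aeval' (v : Fin 2 → ℂ) (g : Fin 2 → MvPolynomial (Fin 2) ℂ)
    (P : MvPolynomial (Fin 2) ℂ) :
    eval v (aeval g P) = eval (fun i => eval v (g i)) P := by
  induction P using MvPolynomial.induction_on with
  | C a => simp
  | add p q hp hq => simp only [map_add, hp, hq]
  | mul_X p j hp => simp only [map_mul, aeval_X, eval_X, hp]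

end Aux

/-- if `γ ≥ 2` then `β - α - 1 > 0`; and if the phantom curve misses
`{X = 0}` while `{H = 0}` has a singular point, then `γ ≥ 2` and `β - α - 1 > 0`. -/
theorem gamma_ge_two_case (α β : ℕ) (hα : 1 ≤ α) (hβ1 : 1 ≤ β)
    (G : PolyPair) (c : ℂ) (hc : c ≠ 0)
    (hdet : jacDet G.1 G.2 = MvPolynomial.C c * (X 0 : MvPolynomial (Fin 2) ℂ) ^ (β - α - 1))
    (hβ : α + 1 ≤ β)
    (H : MvPolynomial (Fin 2) ℂ) (hH : Irreducible H)
    (hzero : {p : ℂ × ℂ | eval2 H p.1 p.2 = 0} = {p : ℂ × ℂ | ∃ y : ℂ, p = polyMap G (0, y)})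
    (γ : ℕ) (hγ : 1 ≤ γ) (S : MvPolynomial (Fin 2) ℂ)
    (hS0 : ∃ y : ℂ, eval2 S 0 y ≠ 0)
    (hfac : aeval ![G.1, G.2] H = (X 0 : MvPolynomial (Fin 2) ℂ) ^ γ * S) :
    (2 ≤ γ → 0 < β - α - 1) ∧
      ((∀ y : ℂ, eval2 S 0 y ≠ 0) → (∃ p : ℂ × ℂ, IsSingularPoint H p) →
        2 ≤ γ ∧ 0 < β - α - 1) := by
  classical
  set g : Fin 2 → MvPolynomial (Fin 2) ℂ := ![G.1, G.2] with hg
  have hg0 : g 0 = G.1 := rfl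
  have hg1 : g 1 = G.2 := rfl
  set P : MvPolynomial (Fin 2) ℂ := (X 0 : MvPolynomial (Fin 2) ℂ) ^ γ * S with hP
  have eq0 : aeval g (pderiv 0 H) * pderiv 0 G.1 + aeval g (pderiv 1 H) * pderiv 0 G.2
      = pderiv 0 P := by
    rw [← hg0, ← hg1, ← chainRuleAux g H 0, hfac]
  have eq1 : aeval g (pderiv 0 H) * pderiv 1 G.1 + aeval g (pderiv 1 H) * pderiv 1 G.2
      = pderiv 1 P := by
    rw [← hg0, ← hg1, ← chainRuleAux g H 1, hfac]
  have keyU : aeval g (pderiv 0 H) * jacDet G.1 G.2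
      = pderiv 0 P * pderiv 1 G.2 - pderiv 1 P * pderiv 0 G.2 := by
    unfold jacDet
    linear_combination (pderiv 1 G.2) * eq0 - (pderiv 0 G.2) * eq1
  have keyV : aeval g (pderiv 1 H) * jacDet G.1 G.2
      = pderiv 1 P * pderiv 0 G.1 - pderiv 0 P * pderiv 1 G.1 := by
    unfold jacDet
    linear_combination (pderiv 0 G.1) * eq1 - (pderiv 1 G.1) * eq0
  -- evaluation of pderiv 1 P at (0, y) vanishes always
  have evP1 : ∀ y : ℂ, eval ![(0:ℂ), y] (pderiv 1 P) = 0 := by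
    intro y
    rw [hP, pderiv_mul, pderiv_pow]
    have : pderiv 1 (X 0 : MvPolynomial (Fin 2) ℂ) = 0 :=
      pderiv_X_of_ne (by decide)
    rw [this]
    simp [zero_pow (by omega : γ ≠ 0)]
  -- Part 1
  have claim1 : 2 ≤ γ → 0 < β - α - 1 := by
    intro h2γ
    by_contra hno
    have hz : β - α - 1 = 0 := by omega
    rw [hz, pow_zero, mul_one] at hdet
    have evP0 : ∀ y : ℂ, eval ![(0:ℂ), y] (pderiv 0 P) = 0 := by
      intro y
      rw [hP, pderiv_mul, pderiv_pow, pderiv_X_self]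
      simp [zero_pow (by omega : γ ≠ 0), zero_pow (by omega : γ - 1 ≠ 0)]
    have hUV0 : ∀ y : ℂ, eval ![(0:ℂ), y] (aeval g (pderiv 0 H)) = 0
        ∧ eval ![(0:ℂ), y] (aeval g (pderiv 1 H)) = 0 := by
      intro y
      constructor
      · have := congrArg (eval ![(0:ℂ), y]) keyU
        rw [hdet] at this
        simp only [map_mul, map_sub, eval_C, evP0 y, evP1 y, zero_mul, sub_zero,
          mul_zero] at this
        exact (mul_eq_zero.mp this).resolve_right hc
      · have := congrArg (eval ![(0:ℂ), y]) keyV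
        rw [hdet] at this
        simp only [map_mul, map_sub, eval_C, evP0 y, evP1 y, zero_mul, sub_zero,
          mul_zero] at this
        exact (mul_eq_zero.mp this).resolve_right hc
    -- every zero of H is a zero of both partial derivatives
    have hsingAll : ∀ x : Fin 2 → ℂ, eval x H = 0 →
        eval x (pderiv 0 H) = 0 ∧ eval x (pderiv 1 H) = 0 := by
      intro x hx
      have hxv : ![x 0, x 1] = x := by
        funext j
        fin_cases j <;> rfl
      have hxZ : ((x 0, x 1) : ℂ × ℂ) ∈ {p : ℂ × ℂ | eval2 H p.1 p.2 = 0} := by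
        simp only [Set.mem_setOf_eq, eval2]
        rw [hxv]
        exact hx
      rw [hzero] at hxZ
      obtain ⟨y, hy⟩ := hxZ
      have hfun : (fun i => eval ![(0:ℂ), y] (g i)) = ![x 0, x 1] := by
        funext j
        have h1 : x 0 = eval2 G.1 0 y := congrArg Prod.fst hy
        have h2 : x 1 = eval2 G.2 0 y := congrArg Prod.snd hy
        rcases (by omega : j = 0 ∨ j = 1) with rfl | rfl
        · rw [Matrix.cons_val_zero, h1]; rfl
        · rw [Matrix.cons_val_one, Matrix.cons_val_zero, h2]; rfl
      constructor
      · have := (hUV0 y).1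
        rw [eval_aeval', hfun, hxv] at this
        exact this
      · have := (hUV0 y).2
        rw [eval_aeval', hfun, hxv] at this
        exact this
    -- Nullstellensatz: H divides its own partial derivatives
    have hprime : Prime H := hH.prime
    have hIP : (Ideal.span {H}).IsPrime :=
      (Ideal.span_singleton_prime hH.ne_zero).mpr hprime
    have hdvd : ∀ i : Fin 2, H ∣ pderiv i H := by
      intro i
      rw [← Ideal.mem_span_singleton,
        ← MvPolynomial.IsPrime.vanishingIdeal_zeroLocus (K := ℂ) (Ideal.span {H})]
      rw [MvPolynomial.mem_vanishingIdeal_iff]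
      intro x hx
      have hxH : eval x H = 0 := by
        rw [MvPolynomial.mem_zeroLocus_iff] at hx
        exact hx H (Ideal.subset_span (Set.mem_singleton H))
      rcases (by omega : i = 0 ∨ i = 1) with rfl | rfl
      · exact (hsingAll x hxH).1
      · exact (hsingAll x hxH).2
    have hp0 : pderiv 0 H = 0 := eq_zero_of_dvd_pderiv (hdvd 0)
    have hp1 : pderiv 1 H = 0 := eq_zero_of_dvd_pderiv (hdvd 1)
    have hC := eq_C_of_pderiv_eq_zero hp0 hp1
    rcases eq_or_ne (coeff 0 H) 0 with h | h
    · rw [h, map_zero] at hC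
      exact hH.ne_zero hC
    · refine hH.not_isUnit (hC ▸ IsUnit.of_mul_eq_one (a := C (coeff 0 H)) (C (coeff 0 H)⁻¹) ?_)
      rw [← map_mul, mul_inv_cancel₀ h, map_one]
  refine ⟨claim1, ?_⟩
  intro hSall hsing
  obtain ⟨p, hpH, hpU, hpV⟩ := hsing
  have hpZ : p ∈ {q : ℂ × ℂ | ∃ y : ℂ, q = polyMap G (0, y)} := by
    rw [← hzero]
    exact hpH
  obtain ⟨y₀, hy₀⟩ := hpZ
  have h2γ : 2 ≤ γ := by
    by_contra hlt
    have hγ1 : γ = 1 := by omega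
    have hfun : (fun i => eval ![(0:ℂ), y₀] (g i)) = ![p.1, p.2] := by
      funext j
      have h1 : p.1 = eval2 G.1 0 y₀ := congrArg Prod.fst hy₀
      have h2 : p.2 = eval2 G.2 0 y₀ := congrArg Prod.snd hy₀
      rcases (by omega : j = 0 ∨ j = 1) with rfl | rfl
      · rw [Matrix.cons_val_zero, h1]; rfl
      · rw [Matrix.cons_val_one, Matrix.cons_val_zero, h2]; rfl
    have := congrArg (eval ![(0:ℂ), y₀]) eq0
    rw [map_add, map_mul, map_mul, eval_aeval', eval_aeval', hfun] at this
    have hU : eval ![p.1, p.2] (pderiv 0 H) = 0 := hpU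
    have hV : eval ![p.1, p.2] (pderiv 1 H) = 0 := hpV
    rw [hU, hV, zero_mul, zero_mul, add_zero] at this
    -- RHS : eval of pderiv 0 (X0^1 * S) at (0, y₀) equals eval2 S 0 y₀
    rw [hP, hγ1, pow_one, pderiv_mul, pderiv_X_self, one_mul] at this
    simp only [map_add, map_mul, eval_X, Matrix.cons_val_zero, zero_mul, add_zero] at this
    exact hSall y₀ this.symm
  exact ⟨h2γ, claim1 h2γ⟩
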